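/- Let x₁,…,xₙ ∈ (0,1/2] and B = [b_{ij}], C = [c_{ij}] two n×n doubly stochastic matrices. Let Aₙ = (1/n)∑_{j=1}^n xⱼ, Gₙ = (∏_{j=1}^n xⱼ)^{1/n}, Aₙ' = (1/n)∑_{j=1}^n (1−xⱼ), Gₙ' = (∏_{j=1}^n (1−xⱼ))^{1/n}. Then Aₙ'/Aₙ ≤ (∏_{i=1}^n I(∑_{j=1}^n b_{ij}(1−xⱼ), ∑_{j=1}^n c_{ij}(1−xⱼ)) / I(∑_{j=1}^n b_{ij}xⱼ, ∑_{j=1}^n c_{ij}xⱼ))^{1/n} ≤ Gₙ'/Gₙ. -/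

import Mathlib

open Finset

/-- The identric mean: `I(a,b) = a` if `a = b`, and
`I(a,b) = (1/e)(b^b/a^a)^{1/(b-a)}` otherwise. -/
noncomputable def identric (a b : ℝ) : ℝ :=
  if a = b then a else (Real.exp 1)⁻¹ * (b ^ b / a ^ a) ^ (b - a)⁻¹

open Set Real

noncomputable def gfun (t : ℝ) : ℝ := Real.log (1 - t) - Real.log t

lemma gfun_convex : ConvexOn ℝ (Set.Ioc 0 (1/2 : ℝ)) gfun := by
  have hint : interior (Set.Ioc 0 (1/2:ℝ)) = Set.Ioo 0 (1/2:ℝ) := interior_Ioc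
  refine convexOn_of_hasDerivWithinAt2_nonneg (f' := fun t => -(1-t)⁻¹ - t⁻¹)
    (f'' := fun t => (t^2)⁻¹ - ((1-t)^2)⁻¹) (convex_Ioc _ _) ?_ ?_ ?_ ?_
  · intro t ht
    have h1 : (1:ℝ) - t ≠ 0 := by
      have := ht.2; nlinarith [ht.1]
    exact (((Real.continuousAt_log h1).comp (by fun_prop)).sub
      (Real.continuousAt_log (ne_of_gt ht.1))).continuousWithinAt
  · intro t ht
    rw [hint] at ht
    have h1 : (1:ℝ) - t ≠ 0 := by nlinarith [ht.1, ht.2]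
    have ht0 : t ≠ 0 := ne_of_gt ht.1
    have d1 : HasDerivAt (fun x : ℝ => 1 - x) (-1) t := (hasDerivAt_id t).const_sub 1
    have d2 : HasDerivAt (fun x : ℝ => Real.log (1 - x)) ((1-t)⁻¹ * (-1)) t :=
      (Real.hasDerivAt_log h1).comp t d1
    have d3 : HasDerivAt gfun ((1-t)⁻¹ * (-1) - t⁻¹) t := d2.sub (Real.hasDerivAt_log ht0)
    have : HasDerivAt gfun (-(1-t)⁻¹ - t⁻¹) t := by convert d3 using 1; ring
    exact this.hasDerivWithinAt
  · intro t ht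
    rw [hint] at ht
    have h1 : (1:ℝ) - t ≠ 0 := by nlinarith [ht.1, ht.2]
    have ht0 : t ≠ 0 := ne_of_gt ht.1
    have d1 : HasDerivAt (fun x : ℝ => 1 - x) (-1) t := (hasDerivAt_id t).const_sub 1
    have d2 : HasDerivAt (fun x : ℝ => -(1-x)⁻¹) (-(-(-1) / (1-t)^2)) t := (d1.inv h1).neg
    have d3 : HasDerivAt (fun x : ℝ => x⁻¹) (-(t^2)⁻¹) t := by
      simpa using hasDerivAt_inv ht0
    have d4 : HasDerivAt (fun x : ℝ => -(1-x)⁻¹ - x⁻¹) (-(-(-1) / (1-t)^2) - -(t^2)⁻¹) t := d2.sub d3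
    have : HasDerivAt (fun x : ℝ => -(1-x)⁻¹ - x⁻¹) ((t^2)⁻¹ - ((1-t)^2)⁻¹) t := by
      convert d4 using 1; field_simp; ring
    exact this.hasDerivWithinAt
  · intro t ht
    rw [hint] at ht
    have h1 : (0:ℝ) < 1 - t := by nlinarith [ht.1, ht.2]
    have h2 : t ≤ 1 - t := by nlinarith [ht.2]
    have htpos : (0:ℝ) < t := ht.1
    have : ((1-t)^2)⁻¹ ≤ (t^2)⁻¹ := by
      apply inv_anti₀ (by positivity)
      nlinarith [ht.1]
    linarith

lemma gfun_continuousAt {t : ℝ} (h0 : 0 < t) (h1 : t < 1) : ContinuousAt gfun t := by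
  have h2 : (1:ℝ) - t ≠ 0 := by nlinarith
  exact ((Real.continuousAt_log h2).comp (by fun_prop)).sub (Real.continuousAt_log (ne_of_gt h0))

lemma identric_pos {a b : ℝ} (ha : 0 < a) (hb : 0 < b) : 0 < identric a b := by
  unfold identric
  split
  · exact ha
  · have h1 : (0:ℝ) < b ^ b / a ^ a := div_pos (Real.rpow_pos_of_pos hb b) (Real.rpow_pos_of_pos ha a)
    positivity

lemma log_identric {a b : ℝ} (ha : 0 < a) (hb : 0 < b) (hab : a ≠ b) :
    Real.log (identric a b) = (b - a)⁻¹ * (b * Real.log b - a * Real.log a) - 1 := by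
  unfold identric
  rw [if_neg hab]
  have h1 : (0:ℝ) < b ^ b / a ^ a := div_pos (Real.rpow_pos_of_pos hb b) (Real.rpow_pos_of_pos ha a)
  rw [Real.log_mul (by positivity) (by positivity), Real.log_inv, Real.log_exp,
    Real.log_rpow h1, Real.log_div (by positivity) (by positivity),
    Real.log_rpow hb, Real.log_rpow ha]
  ring

lemma identric_comm {a b : ℝ} (ha : 0 < a) (hb : 0 < b) : identric a b = identric b a := by
  rcases eq_or_ne a b with h | h
  · rw [h]
  · unfold identric
    rw [if_neg h, if_neg (Ne.symm h)]
    congr 1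
    have hb1 : (0:ℝ) < b ^ b / a ^ a := div_pos (Real.rpow_pos_of_pos hb b) (Real.rpow_pos_of_pos ha a)
    have : a ^ a / b ^ b = (b ^ b / a ^ a)⁻¹ := by
      rw [inv_div]
    rw [this, Real.inv_rpow (le_of_lt hb1), ← Real.rpow_neg (le_of_lt hb1)]
    congr 1
    rw [← inv_neg, neg_sub]

lemma integral_gfun {u v : ℝ} (hu : 0 < u) (hv : 0 < v) (hu1 : u < 1) (hv1 : v < 1) :
    ∫ t in u..v, gfun t =
      ((1-u) * Real.log (1-u) - (1-v) * Real.log (1-v)) - (v * Real.log v - u * Real.log u) := by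
  have hi1 : IntervalIntegrable (fun t => Real.log (1 - t)) MeasureTheory.volume u v := by
    apply ContinuousOn.intervalIntegrable
    intro t ht
    have ht1 : 0 < t ∨ True := Or.inr trivial
    have h2 : (1:ℝ) - t ≠ 0 := by
      rcases Set.mem_uIcc.mp ht with ⟨h3, h4⟩ | ⟨h3, h4⟩ <;> nlinarith
    exact (((Real.continuousAt_log h2).comp (by fun_prop))).continuousWithinAt
  have hi2 : IntervalIntegrable (fun t => Real.log t) MeasureTheory.volume u v := by
    apply ContinuousOn.intervalIntegrable
    intro t ht
    have h2 : t ≠ 0 := by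
      rcases Set.mem_uIcc.mp ht with ⟨h3, h4⟩ | ⟨h3, h4⟩ <;> nlinarith
    exact (Real.continuousAt_log h2).continuousWithinAt
  have hsplit : ∫ t in u..v, gfun t = (∫ t in u..v, Real.log (1 - t)) - ∫ t in u..v, Real.log t :=
    intervalIntegral.integral_sub hi1 hi2
  have h1 : (∫ t in u..v, Real.log (1 - t)) = ∫ s in (1-v)..(1-u), Real.log s :=
    intervalIntegral.integral_comp_sub_left Real.log 1
  have h2 : (∫ s in (1-v)..(1-u), Real.log s) =
      (1-u) * Real.log (1-u) - (1-v) * Real.log (1-v) - (1-u) + (1-v) := by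
    apply integral_log
  have h3 : (∫ t in u..v, Real.log t) = v * Real.log v - u * Real.log u - v + u := by
    apply integral_log
  rw [hsplit, h1, h2, h3]; ring

lemma logratio_eq {u v : ℝ} (hu : 0 < u) (hv : 0 < v) (hu1 : u < 1) (hv1 : v < 1) (huv : u < v) :
    Real.log (identric (1-u) (1-v)) - Real.log (identric u v) =
      (∫ t in u..v, gfun t) / (v - u) := by
  have h1 : Real.log (identric u v) = (v - u)⁻¹ * (v * Real.log v - u * Real.log u) - 1 :=
    log_identric hu hv (ne_of_lt huv)
  have h2 : Real.log (identric (1-u) (1-v)) =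
      ((1-v) - (1-u))⁻¹ * ((1-v) * Real.log (1-v) - (1-u) * Real.log (1-u)) - 1 :=
    log_identric (by linarith) (by linarith) (by intro h; apply ne_of_lt huv; linarith)
  rw [h1, h2, integral_gfun hu hv hu1 hv1]
  have h3 : (1:ℝ) - v - (1 - u) = -(v - u) := by ring
  rw [h3, inv_neg, div_eq_inv_mul]
  ring

lemma Icc_subset_dom {u v : ℝ} (hu : u ∈ Set.Ioc 0 (1/2:ℝ)) (hv : v ∈ Set.Ioc 0 (1/2:ℝ)) :
    Set.Icc u v ⊆ Set.Ioc 0 (1/2:ℝ) := by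
  intro t ht
  exact ⟨lt_of_lt_of_le hu.1 ht.1, le_trans ht.2 hv.2⟩

lemma gfun_intervalIntegrable {u v : ℝ} (hu : u ∈ Set.Ioc 0 (1/2:ℝ)) (hv : v ∈ Set.Ioc 0 (1/2:ℝ)) :
    IntervalIntegrable gfun MeasureTheory.volume u v := by
  apply ContinuousOn.intervalIntegrable
  intro t ht
  rcases Set.mem_uIcc.mp ht with ⟨h3, h4⟩ | ⟨h3, h4⟩
  · exact (gfun_continuousAt (lt_of_lt_of_le hu.1 h3) (by nlinarith [hv.2])).continuousWithinAt
  · exact (gfun_continuousAt (lt_of_lt_of_le hv.1 h3) (by nlinarith [hu.2])).continuousWithinAt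

lemma hh_right {u v : ℝ} (hu : u ∈ Set.Ioc 0 (1/2:ℝ)) (hv : v ∈ Set.Ioc 0 (1/2:ℝ)) (huv : u < v) :
    (∫ t in u..v, gfun t) ≤ (v - u) * ((gfun u + gfun v) / 2) := by
  have hw : (0:ℝ) < v - u := by linarith
  have key : ∀ t ∈ Set.Icc u v,
      gfun t ≤ ((v - t) * gfun u + (t - u) * gfun v) / (v - u) := by
    intro t ht
    have ha : (0:ℝ) ≤ (v - t) / (v - u) := div_nonneg (by linarith [ht.2]) (le_of_lt hw)
    have hb : (0:ℝ) ≤ (t - u) / (v - u) := div_nonneg (by linarith [ht.1]) (le_of_lt hw)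
    have hab : (v - t) / (v - u) + (t - u) / (v - u) = 1 := by
      field_simp
      ring
    have hcomb : ((v - t) / (v - u)) • u + ((t - u) / (v - u)) • v = t := by
      simp only [smul_eq_mul]
      field_simp
      ring
    have := gfun_convex.2 hu hv ha hb hab
    rw [hcomb] at this
    simpa only [smul_eq_mul, div_mul_eq_mul_div, ← add_div] using this
  have hintlin : (∫ t in u..v, ((v - t) * gfun u + (t - u) * gfun v) / (v - u)) =
      (v - u) * ((gfun u + gfun v) / 2) := by
    have heq : (fun t => ((v - t) * gfun u + (t - u) * gfun v) / (v - u)) =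
        fun t => (v * gfun u - u * gfun v) / (v - u) + ((gfun v - gfun u) / (v - u)) * t := by
      funext t
      field_simp
      ring
    rw [heq, intervalIntegral.integral_add intervalIntegrable_const
      (intervalIntegral.intervalIntegrable_id.const_mul _),
      intervalIntegral.integral_const, intervalIntegral.integral_const_mul, integral_id]
    have : (v - u) ≠ 0 := ne_of_gt hw
    simp only [smul_eq_mul]
    field_simp
    ring
  calc (∫ t in u..v, gfun t)
      ≤ ∫ t in u..v, ((v - t) * gfun u + (t - u) * gfun v) / (v - u) := by
        apply intervalIntegral.integral_mono_on (le_of_lt huv)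
          (gfun_intervalIntegrable hu hv)
        · apply ContinuousOn.intervalIntegrable
          fun_prop
        · exact key
    _ = (v - u) * ((gfun u + gfun v) / 2) := hintlin

lemma hh_left {u v : ℝ} (hu : u ∈ Set.Ioc 0 (1/2:ℝ)) (hv : v ∈ Set.Ioc 0 (1/2:ℝ)) (huv : u < v) :
    (v - u) * gfun ((u + v) / 2) ≤ ∫ t in u..v, gfun t := by
  have hw : (0:ℝ) < v - u := by linarith
  have hrefl : (∫ t in u..v, gfun (u + v - t)) = ∫ t in u..v, gfun t := by
    rw [intervalIntegral.integral_comp_sub_left gfun (u + v)]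
    norm_num
  have hirefl : IntervalIntegrable (fun t => gfun (u + v - t)) MeasureTheory.volume u v := by
    apply ContinuousOn.intervalIntegrable
    intro t ht
    rcases Set.mem_uIcc.mp ht with ⟨h3, h4⟩ | ⟨h3, h4⟩
    · exact ((gfun_continuousAt (by linarith [hu.1]) (by nlinarith [hu.2, hv.2, hu.1, hv.1])).comp
        (by fun_prop)).continuousWithinAt
    · exact ((gfun_continuousAt (by linarith [hu.1]) (by nlinarith [hu.2, hv.2, hu.1, hv.1])).comp
        (by fun_prop)).continuousWithinAt
  have key : ∀ t ∈ Set.Icc u v,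
      gfun ((u + v) / 2) ≤ (gfun t + gfun (u + v - t)) / 2 := by
    intro t ht
    have ht' : u + v - t ∈ Set.Icc u v := ⟨by linarith [ht.2], by linarith [ht.1]⟩
    have hmem1 := Icc_subset_dom hu hv ht
    have hmem2 := Icc_subset_dom hu hv ht'
    have := gfun_convex.2 hmem1 hmem2 (by norm_num : (0:ℝ) ≤ 1/2) (by norm_num : (0:ℝ) ≤ 1/2)
      (by norm_num)
    have hcomb : (1/2 : ℝ) • t + (1/2 : ℝ) • (u + v - t) = (u + v) / 2 := by
      simp only [smul_eq_mul]; ring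
    rw [hcomb] at this
    simp only [smul_eq_mul] at this
    linarith
  have hmono : (∫ t in u..v, gfun ((u + v) / 2)) ≤ ∫ t in u..v, (gfun t + gfun (u + v - t)) / 2 := by
    apply intervalIntegral.integral_mono_on (le_of_lt huv) intervalIntegrable_const
    · exact ((gfun_intervalIntegrable hu hv).add hirefl).div_const 2
    · exact key
  rw [intervalIntegral.integral_const, smul_eq_mul] at hmono
  have hsplit : (∫ t in u..v, (gfun t + gfun (u + v - t)) / 2) = ∫ t in u..v, gfun t := by
    have : (fun t => (gfun t + gfun (u + v - t)) / 2) =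
        fun t => (1/2 : ℝ) * gfun t + (1/2 : ℝ) * gfun (u + v - t) := by
      funext t; ring
    rw [this, intervalIntegral.integral_add ((gfun_intervalIntegrable hu hv).const_mul _)
      (hirefl.const_mul _), intervalIntegral.integral_const_mul,
      intervalIntegral.integral_const_mul, hrefl]
    ring
  linarith [hmono, hsplit.symm ▸ hmono]

lemma key_lemma {u v : ℝ} (hu : u ∈ Set.Ioc 0 (1/2:ℝ)) (hv : v ∈ Set.Ioc 0 (1/2:ℝ)) :
    gfun ((u + v) / 2) ≤ Real.log (identric (1-u) (1-v)) - Real.log (identric u v) ∧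
    Real.log (identric (1-u) (1-v)) - Real.log (identric u v) ≤ (gfun u + gfun v) / 2 := by
  have main : ∀ a b : ℝ, a ∈ Set.Ioc 0 (1/2:ℝ) → b ∈ Set.Ioc 0 (1/2:ℝ) → a < b →
      gfun ((a + b) / 2) ≤ Real.log (identric (1-a) (1-b)) - Real.log (identric a b) ∧
      Real.log (identric (1-a) (1-b)) - Real.log (identric a b) ≤ (gfun a + gfun b) / 2 := by
    intro a b ha hb hab
    have hw : (0:ℝ) < b - a := by linarith
    rw [logratio_eq ha.1 hb.1 (by linarith [ha.2]) (by linarith [hb.2]) hab]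
    constructor
    · rw [le_div_iff₀ hw]
      have := hh_left ha hb hab
      linarith [hh_left ha hb hab]
    · rw [div_le_iff₀ hw]
      linarith [hh_right ha hb hab]
  rcases lt_trichotomy u v with h | h | h
  · exact main u v hu hv h
  · subst h
    have h1 : identric u u = u := if_pos rfl
    have h2 : identric (1-u) (1-u) = 1 - u := if_pos rfl
    rw [h1, h2]
    have : Real.log (1 - u) - Real.log u = gfun u := rfl
    rw [this]
    constructor
    · apply le_of_eq; congr 1; ring
    · apply le_of_eq; ring
  · have := main v u hv hu h
    have e1 : identric (1-v) (1-u) = identric (1-u) (1-v) :=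
      identric_comm (by linarith [hv.2]) (by linarith [hu.2])
    have e2 : identric v u = identric u v := identric_comm hv.1 hu.1
    rw [e1, e2] at this
    constructor
    · have := this.1; rw [show (v + u)/2 = (u + v)/2 by ring] at this; exact this
    · have := this.2; linarith [this]

/-- Refinement of Ky Fan's inequality via two doubly stochastic matrices and the
identric mean. -/
theorem ky_fan_refinement_identric_doubly_stochastic
    {n : ℕ} (hn : 0 < n)
    (x : Fin n → ℝ) (hx0 : ∀ j, 0 < x j) (hxhalf : ∀ j, x j ≤ 1 / 2)
    (b c : Fin n → Fin n → ℝ)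
    (hb0 : ∀ i j, 0 ≤ b i j) (hbrow : ∀ i, ∑ j, b i j = 1) (hbcol : ∀ j, ∑ i, b i j = 1)
    (hc0 : ∀ i j, 0 ≤ c i j) (hcrow : ∀ i, ∑ j, c i j = 1) (hccol : ∀ j, ∑ i, c i j = 1) :
    ((∑ j, (1 - x j)) / n) / ((∑ j, x j) / n) ≤
        (∏ i, identric (∑ j, b i j * (1 - x j)) (∑ j, c i j * (1 - x j)) /
            identric (∑ j, b i j * x j) (∑ j, c i j * x j)) ^ ((n : ℝ)⁻¹) ∧
      (∏ i, identric (∑ j, b i j * (1 - x j)) (∑ j, c i j * (1 - x j)) /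
            identric (∑ j, b i j * x j) (∑ j, c i j * x j)) ^ ((n : ℝ)⁻¹) ≤
        (∏ j, (1 - x j)) ^ ((n : ℝ)⁻¹) / (∏ j, x j) ^ ((n : ℝ)⁻¹) := by
  have hnpos : (0:ℝ) < n := by exact_mod_cast hn
  haveI hne : Nonempty (Fin n) := Fin.pos_iff_nonempty.mp hn
  set u : Fin n → ℝ := fun i => ∑ j, b i j * x j with hu_def
  set v : Fin n → ℝ := fun i => ∑ j, c i j * x j with hv_def
  have hxmem : ∀ j, x j ∈ Set.Ioc 0 (1/2:ℝ) := fun j => ⟨hx0 j, hxhalf j⟩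
  have mem_of : ∀ (w : Fin n → Fin n → ℝ), (∀ i j, 0 ≤ w i j) → (∀ i, ∑ j, w i j = 1) →
      ∀ i, (∑ j, w i j * x j) ∈ Set.Ioc 0 (1/2:ℝ) := by
    intro w hw0 hwrow i
    constructor
    · obtain ⟨j0, hj0⟩ : ∃ j, 0 < w i j := by
        by_contra hcon
        push_neg at hcon
        have h0 : ∑ j, w i j = 0 :=
          Finset.sum_eq_zero (fun j hj => le_antisymm (hcon j) (hw0 i j))
        rw [hwrow i] at h0; norm_num at h0
      have hle : w i j0 * x j0 ≤ ∑ j, w i j * x j :=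
        Finset.single_le_sum (fun j _ => mul_nonneg (hw0 i j) (le_of_lt (hx0 j)))
          (Finset.mem_univ j0)
      have hpos : 0 < w i j0 * x j0 := mul_pos hj0 (hx0 j0)
      linarith
    · calc ∑ j, w i j * x j ≤ ∑ j, w i j * (1/2) :=
            Finset.sum_le_sum (fun j _ => mul_le_mul_of_nonneg_left (hxhalf j) (hw0 i j))
        _ = 1/2 := by rw [← Finset.sum_mul, hwrow i, one_mul]
  have humem := mem_of b hb0 hbrow
  have hvmem := mem_of c hc0 hcrow
  have hone_sub : ∀ (w : Fin n → Fin n → ℝ), (∀ i, ∑ j, w i j = 1) →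
      ∀ i, (∑ j, w i j * (1 - x j)) = 1 - ∑ j, w i j * x j := by
    intro w hwrow i
    have h1 : ∀ j, w i j * (1 - x j) = w i j - w i j * x j := fun j => by ring
    simp_rw [h1]
    rw [Finset.sum_sub_distrib, hwrow i]
  have hcolsum : ∀ (w : Fin n → Fin n → ℝ), (∀ j, ∑ i, w i j = 1) → ∀ (y : Fin n → ℝ),
      (∑ i, ∑ j, w i j * y j) = ∑ j, y j := by
    intro w hwcol y
    rw [Finset.sum_comm]
    exact Finset.sum_congr rfl (fun j _ => by rw [← Finset.sum_mul, hwcol j, one_mul])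
  set S := ∑ j, x j with hS_def
  have hSpos : 0 < S := Finset.sum_pos (fun j _ => hx0 j) Finset.univ_nonempty
  have hShalf : S ≤ n / 2 := by
    calc S ≤ ∑ _j : Fin n, (1/2 : ℝ) := Finset.sum_le_sum (fun j _ => hxhalf j)
      _ = n / 2 := by simp [Finset.card_univ]; ring
  set A := S / n with hA_def
  have hAmem : A ∈ Set.Ioc 0 (1/2:ℝ) := by
    constructor
    · exact div_pos hSpos hnpos
    · rw [div_le_iff₀ hnpos]; linarith
  have hT : (∑ j, (1 - x j)) = n - S := by
    rw [Finset.sum_sub_distrib]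
    simp [Finset.card_univ]
    exact hS_def.symm
  set R : Fin n → ℝ := fun i => identric (1 - u i) (1 - v i) / identric (u i) (v i) with hR_def
  have h1u : ∀ i, (0:ℝ) < 1 - u i := fun i => by linarith [(humem i).2]
  have h1v : ∀ i, (0:ℝ) < 1 - v i := fun i => by linarith [(hvmem i).2]
  have hRpos : ∀ i, 0 < R i := fun i =>
    div_pos (identric_pos (h1u i) (h1v i)) (identric_pos (humem i).1 (hvmem i).1)
  have hlogR : ∀ i, Real.log (R i) =
      Real.log (identric (1 - u i) (1 - v i)) - Real.log (identric (u i) (v i)) := fun i =>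
    Real.log_div (ne_of_gt (identric_pos (h1u i) (h1v i)))
      (ne_of_gt (identric_pos (humem i).1 (hvmem i).1))
  have hprod_eq : (∏ i, identric (∑ j, b i j * (1 - x j)) (∑ j, c i j * (1 - x j)) /
      identric (∑ j, b i j * x j) (∑ j, c i j * x j)) = ∏ i, R i :=
    Finset.prod_congr rfl (fun i _ => by rw [hone_sub b hbrow i, hone_sub c hcrow i])
  set P := ∏ i, R i with hP_def
  have hPpos : 0 < P := Finset.prod_pos (fun i _ => hRpos i)
  have hlogP : Real.log P = ∑ i, Real.log (R i) :=
    Real.log_prod (fun i _ => ne_of_gt (hRpos i))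
  -- key pointwise bounds
  have key1 : ∀ i, gfun ((u i + v i) / 2) ≤ Real.log (R i) := by
    intro i
    rw [hlogR i]
    exact (key_lemma (humem i) (hvmem i)).1
  have key2 : ∀ i, Real.log (R i) ≤ (gfun (u i) + gfun (v i)) / 2 := by
    intro i
    rw [hlogR i]
    exact (key_lemma (humem i) (hvmem i)).2
  -- Jensen for the midpoints
  have hsum_u : ∑ i, u i = S := hcolsum b hbcol x
  have hsum_v : ∑ i, v i = S := hcolsum c hccol x
  have jensenA : gfun A ≤ (n:ℝ)⁻¹ * ∑ i, gfun ((u i + v i) / 2) := by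
    have hw1 : ∑ _i : Fin n, (n:ℝ)⁻¹ = 1 := by
      rw [Finset.sum_const, Finset.card_univ, Fintype.card_fin, nsmul_eq_mul]
      field_simp
    have hmem : ∀ i ∈ (Finset.univ : Finset (Fin n)), (u i + v i) / 2 ∈ Set.Ioc 0 (1/2:ℝ) := by
      intro i _
      constructor
      · have := (humem i).1; have := (hvmem i).1; positivity
      · linarith [(humem i).2, (hvmem i).2]
    have := gfun_convex.map_sum_le (fun i _ => by positivity) hw1 hmem
    simp only [smul_eq_mul] at this
    have hcomb : ∑ i, (n:ℝ)⁻¹ * ((u i + v i) / 2) = A := by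
      rw [← Finset.mul_sum]
      have : ∑ i, (u i + v i) / 2 = S := by
        rw [← Finset.sum_div, Finset.sum_add_distrib, hsum_u, hsum_v]
        ring
      rw [this, hA_def, div_eq_inv_mul]
    rw [hcomb] at this
    calc gfun A ≤ ∑ i, (n:ℝ)⁻¹ * gfun ((u i + v i) / 2) := this
      _ = (n:ℝ)⁻¹ * ∑ i, gfun ((u i + v i) / 2) := by rw [Finset.mul_sum]
  -- Jensen for each row
  have jensen_row : ∀ (w : Fin n → Fin n → ℝ), (∀ i j, 0 ≤ w i j) → (∀ i, ∑ j, w i j = 1) →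
      ∀ i, gfun (∑ j, w i j * x j) ≤ ∑ j, w i j * gfun (x j) := by
    intro w hw0 hwrow i
    have := gfun_convex.map_sum_le (fun j _ => hw0 i j) (hwrow i) (fun j _ => hxmem j)
    simpa only [smul_eq_mul] using this
  have sumU : ∑ i, gfun (u i) ≤ ∑ j, gfun (x j) := by
    calc ∑ i, gfun (u i) ≤ ∑ i, ∑ j, b i j * gfun (x j) :=
          Finset.sum_le_sum (fun i _ => jensen_row b hb0 hbrow i)
      _ = ∑ j, gfun (x j) := hcolsum b hbcol _
  have sumV : ∑ i, gfun (v i) ≤ ∑ j, gfun (x j) := by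
    calc ∑ i, gfun (v i) ≤ ∑ i, ∑ j, c i j * gfun (x j) :=
          Finset.sum_le_sum (fun i _ => jensen_row c hc0 hcrow i)
      _ = ∑ j, gfun (x j) := hcolsum c hccol _
  -- log of the middle term
  have hlogMid : Real.log (P ^ ((n:ℝ)⁻¹)) = (n:ℝ)⁻¹ * ∑ i, Real.log (R i) := by
    rw [Real.log_rpow hPpos, hlogP]
  have hMidpos : 0 < P ^ ((n:ℝ)⁻¹) := Real.rpow_pos_of_pos hPpos _
  rw [hprod_eq]
  constructor
  · -- left inequality
    have hTpos : (0:ℝ) < n - S := by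
      have : (1:ℝ) ≤ n := by exact_mod_cast hn
      linarith
    have hLpos : 0 < ((∑ j, (1 - x j)) / n) / (S / n) := by
      rw [hT]; positivity
    rw [← Real.log_le_log_iff hLpos hMidpos]
    have hlogL : Real.log (((∑ j, (1 - x j)) / n) / (S / n)) = gfun A := by
      rw [hT]
      rw [Real.log_div (by positivity) (by positivity)]
      have h1A : 1 - A = (n - S) / n := by
        rw [hA_def]; field_simp
      unfold gfun
      rw [h1A, hA_def]
    rw [hlogL, hlogMid]
    calc gfun A ≤ (n:ℝ)⁻¹ * ∑ i, gfun ((u i + v i) / 2) := jensenA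
      _ ≤ (n:ℝ)⁻¹ * ∑ i, Real.log (R i) := by
          apply mul_le_mul_of_nonneg_left _ (by positivity)
          exact Finset.sum_le_sum (fun i _ => key1 i)
  · -- right inequality
    have hpx : 0 < ∏ j, x j := Finset.prod_pos (fun j _ => hx0 j)
    have hp1x : 0 < ∏ j, (1 - x j) := Finset.prod_pos (fun j _ => by nlinarith [hx0 j, hxhalf j])
    have hQpos : 0 < (∏ j, (1 - x j)) ^ ((n:ℝ)⁻¹) / (∏ j, x j) ^ ((n:ℝ)⁻¹) := by
      have := Real.rpow_pos_of_pos hp1x ((n:ℝ)⁻¹)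
      have := Real.rpow_pos_of_pos hpx ((n:ℝ)⁻¹)
      positivity
    rw [← Real.log_le_log_iff hMidpos hQpos]
    have hlogQ : Real.log ((∏ j, (1 - x j)) ^ ((n:ℝ)⁻¹) / (∏ j, x j) ^ ((n:ℝ)⁻¹)) =
        (n:ℝ)⁻¹ * ∑ j, gfun (x j) := by
      rw [Real.log_div (ne_of_gt (Real.rpow_pos_of_pos hp1x _))
        (ne_of_gt (Real.rpow_pos_of_pos hpx _)), Real.log_rpow hp1x, Real.log_rpow hpx,
        Real.log_prod (fun j _ => by nlinarith [hx0 j, hxhalf j]),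
        Real.log_prod (fun j _ => ne_of_gt (hx0 j))]
      rw [← mul_sub, ← Finset.sum_sub_distrib]
      rfl
    rw [hlogMid, hlogQ]
    apply mul_le_mul_of_nonneg_left _ (by positivity)
    calc ∑ i, Real.log (R i) ≤ ∑ i, (gfun (u i) + gfun (v i)) / 2 :=
          Finset.sum_le_sum (fun i _ => key2 i)
      _ = ((∑ i, gfun (u i)) + ∑ i, gfun (v i)) / 2 := by
          rw [← Finset.sum_div, Finset.sum_add_distrib]
      _ ≤ ∑ j, gfun (x j) := by linarith [sumU, sumV]
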